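/- Let X be a real smooth Banach space, i.e. for every unit vector u ∈ X there is a unique continuous linear functional f with ‖f‖ = 1 and f(u) = 1. Let A be a bounded linear operator on X with ‖A‖ = 1, and let x, y be unit vectors at which A attains its norm (x, y ∈ M_A). Then x is norm-parallel to y if and only if Ax is norm-parallel to Ay. -/

import Mathlib

theorem parallel_iff_image_parallel_smooth
    {X : Type*} [NormedAddCommGroup X] [NormedSpace ℝ X] [CompleteSpace X]
    (hsm : ∀ u : X, ‖u‖ = 1 → ∃! f : X →L[ℝ] ℝ, ‖f‖ = 1 ∧ f u = 1)
    (A : X →L[ℝ] X) (hA : ‖A‖ = 1) (x y : X)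
    (hx : ‖x‖ = 1 ∧ ‖A x‖ = ‖A‖) (hy : ‖y‖ = 1 ∧ ‖A y‖ = ‖A‖) :
    (∃ ε : ℝ, (ε = 1 ∨ ε = -1) ∧ ‖x + ε • y‖ = ‖x‖ + ‖y‖) ↔
      ∃ ε : ℝ, (ε = 1 ∨ ε = -1) ∧ ‖A x + ε • A y‖ = ‖A x‖ + ‖A y‖ := by
  obtain ⟨hx1, hAx⟩ := hx
  obtain ⟨hy1, hAy⟩ := hy
  rw [hA] at hAx hAy
  constructor
  · rintro ⟨ε, hε, hsum⟩
    refine ⟨ε, hε, ?_⟩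
    have hεabs : |ε| = 1 := by rcases hε with h | h <;> simp [h]
    have hεy : ‖ε • y‖ = 1 := by rw [norm_smul, Real.norm_eq_abs, hεabs, hy1, one_mul]
    have hεAy : ‖ε • A y‖ = 1 := by rw [norm_smul, Real.norm_eq_abs, hεabs, hAy, one_mul]
    have hxy2 : ‖x + ε • y‖ = 2 := by rw [hsum, hx1, hy1]; norm_num
    have hne : x + ε • y ≠ 0 := by
      intro h; rw [h, norm_zero] at hxy2; norm_num at hxy2
    obtain ⟨f, hf1, hfval⟩ := exists_dual_vector ℝ (x + ε • y) (norm_ne_zero_iff.mpr hne)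
    rw [hxy2] at hfval
    have hfadd : f x + f (ε • y) = 2 := by rw [← map_add]; exact_mod_cast hfval
    have hfx_le : f x ≤ 1 := by
      have := (f.le_opNorm x)
      rw [hf1, hx1, one_mul] at this
      calc f x ≤ ‖f x‖ := le_abs_self _
        _ ≤ 1 := this
    have hfεy_le : f (ε • y) ≤ 1 := by
      have := (f.le_opNorm (ε • y))
      rw [hf1, hεy, one_mul] at this
      calc f (ε • y) ≤ ‖f (ε • y)‖ := le_abs_self _
        _ ≤ 1 := this
    have hfx : f x = 1 := by linarith
    have hfεy : f (ε • y) = 1 := by linarith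
    have hAxne : A x ≠ 0 := by
      intro h; rw [h, norm_zero] at hAx; norm_num at hAx
    obtain ⟨g, hg1, hgval⟩ := exists_dual_vector ℝ (A x) (norm_ne_zero_iff.mpr hAxne)
    rw [hAx] at hgval
    have hgA : g (A x) = 1 := by exact_mod_cast hgval
    have hcomp_le : ‖g.comp A‖ ≤ 1 := by
      calc ‖g.comp A‖ ≤ ‖g‖ * ‖A‖ := g.opNorm_comp_le A
        _ = 1 := by rw [hg1, hA, one_mul]
    have hcomp_ge : 1 ≤ ‖g.comp A‖ := by
      have := (g.comp A).le_opNorm x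
      rw [hx1, mul_one] at this
      calc (1 : ℝ) = ‖(g.comp A) x‖ := by
            simp only [ContinuousLinearMap.comp_apply, hgA]; norm_num
        _ ≤ ‖g.comp A‖ := this
    have hcomp1 : ‖g.comp A‖ = 1 := le_antisymm hcomp_le hcomp_ge
    have hcompx : (g.comp A) x = 1 := by
      simp only [ContinuousLinearMap.comp_apply, hgA]
    -- uniqueness at x
    obtain ⟨f₀, _, huniq⟩ := hsm x hx1
    have heq : f = g.comp A := by
      rw [huniq f ⟨hf1, hfx⟩, huniq (g.comp A) ⟨hcomp1, hcompx⟩]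
    have hgεAy : g (ε • A y) = 1 := by
      have : (g.comp A) (ε • y) = 1 := by rw [← heq]; exact hfεy
      simpa [map_smul] using this
    have hglower : (2 : ℝ) ≤ ‖A x + ε • A y‖ := by
      have hv : g (A x + ε • A y) = 2 := by rw [map_add, hgA, hgεAy]; norm_num
      have := g.le_opNorm (A x + ε • A y)
      rw [hg1, one_mul] at this
      calc (2 : ℝ) = g (A x + ε • A y) := hv.symm
        _ ≤ ‖g (A x + ε • A y)‖ := le_abs_self _
        _ ≤ ‖A x + ε • A y‖ := this
    have hupper : ‖A x + ε • A y‖ ≤ 2 := by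
      calc ‖A x + ε • A y‖ ≤ ‖A x‖ + ‖ε • A y‖ := norm_add_le _ _
        _ = 2 := by rw [hAx, hεAy]; norm_num
    rw [hAx, hAy]
    linarith
  · rintro ⟨ε, hε, hsum⟩
    refine ⟨ε, hε, ?_⟩
    have hεabs : |ε| = 1 := by rcases hε with h | h <;> simp [h]
    have hεy : ‖ε • y‖ = 1 := by rw [norm_smul, Real.norm_eq_abs, hεabs, hy1, one_mul]
    have hw2 : ‖A x + ε • A y‖ = 2 := by rw [hsum, hAx, hAy]; norm_num
    have hne : A x + ε • A y ≠ 0 := by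
      intro h; rw [h, norm_zero] at hw2; norm_num at hw2
    obtain ⟨f, hf1, hfval⟩ := exists_dual_vector ℝ (A x + ε • A y) (norm_ne_zero_iff.mpr hne)
    rw [hw2] at hfval
    have hfval' : f (A x + ε • A y) = 2 := by exact_mod_cast hfval
    have hlower : (2 : ℝ) ≤ ‖x + ε • y‖ := by
      have hcomp_le : ‖f.comp A‖ ≤ 1 := by
        calc ‖f.comp A‖ ≤ ‖f‖ * ‖A‖ := f.opNorm_comp_le A
          _ = 1 := by rw [hf1, hA, one_mul]
      have hv : (f.comp A) (x + ε • y) = 2 := by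
        simpa [map_add, map_smul] using hfval'
      have := (f.comp A).le_opNorm (x + ε • y)
      calc (2 : ℝ) = (f.comp A) (x + ε • y) := hv.symm
        _ ≤ ‖(f.comp A) (x + ε • y)‖ := le_abs_self _
        _ ≤ ‖f.comp A‖ * ‖x + ε • y‖ := this
        _ ≤ 1 * ‖x + ε • y‖ := by
            apply mul_le_mul_of_nonneg_right hcomp_le (norm_nonneg _)
        _ = ‖x + ε • y‖ := one_mul _
    have hupper : ‖x + ε • y‖ ≤ 2 := by
      calc ‖x + ε • y‖ ≤ ‖x‖ + ‖ε • y‖ := norm_add_le _ _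
        _ = 2 := by rw [hx1, hεy]; norm_num
    rw [hx1, hy1]
    linarith
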